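/- If {gₙ} is a weak atomic system for a closable densely defined operator A, then {gₙ} is a weak A-frame: there exists α > 0 such that α‖A* f‖² ≤ ∑ₙ |⟨f, gₙ⟩|² < ∞ for all f ∈ D(A*). -/

import Mathlib

open scoped ComplexInnerProductSpace


private lemma rp2 : ∀ t : ℝ, t ^ ((2 : ENNReal).toReal) = t ^ (2 : ℕ) := fun t => by
  rw [show ((2 : ENNReal).toReal) = ((2:ℕ):ℝ) by norm_num, Real.rpow_natCast]

lemma cs_tsum (a b : ℕ → ℂ) (ha : Summable fun n => ‖a n‖ ^ 2)
    (hb : Summable fun n => ‖b n‖ ^ 2) :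
    ‖∑' n, a n * b n‖ ≤ Real.sqrt (∑' n, ‖a n‖ ^ 2) * Real.sqrt (∑' n, ‖b n‖ ^ 2) := by
  have ha' : Memℓp (fun n => (starRingEnd ℂ) (a n)) 2 := by
    apply memℓp_gen
    simp only [rp2, RCLike.norm_conj]
    exact ha
  have hb' : Memℓp b 2 := by
    apply memℓp_gen
    simp only [rp2]
    exact hb
  set x : lp (fun _ : ℕ => ℂ) 2 := ⟨_, ha'⟩ with hx
  set y : lp (fun _ : ℕ => ℂ) 2 := ⟨_, hb'⟩ with hy
  have hinner : (⟪x, y⟫ : ℂ) = ∑' n, a n * b n := by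
    rw [lp.inner_eq_tsum]
    exact tsum_congr fun n => by simp [hx, hy, RCLike.inner_apply]; ring
  have hnx : ‖x‖ = Real.sqrt (∑' n, ‖a n‖ ^ 2) := by
    have h1 := lp.norm_rpow_eq_tsum (p := 2) (by norm_num) x
    simp only [rp2] at h1
    have h2 : ‖x‖ ^ (2:ℕ) = ∑' n, ‖a n‖ ^ (2:ℕ) := by
      rw [h1]
      exact tsum_congr fun n => by simp [hx, RCLike.norm_conj]
    rw [← h2, Real.sqrt_sq (norm_nonneg _)]
  have hny : ‖y‖ = Real.sqrt (∑' n, ‖b n‖ ^ 2) := by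
    have h1 := lp.norm_rpow_eq_tsum (p := 2) (by norm_num) y
    simp only [rp2] at h1
    have h2 : ‖y‖ ^ (2:ℕ) = ∑' n, ‖b n‖ ^ (2:ℕ) := by
      rw [h1]
    rw [← h2, Real.sqrt_sq (norm_nonneg _)]
  calc ‖∑' n, a n * b n‖ = ‖(⟪x, y⟫ : ℂ)‖ := by rw [hinner]
    _ ≤ ‖x‖ * ‖y‖ := norm_inner_le_norm x y
    _ = _ := by rw [hnx, hny]

/-- If `{gₙ}` is a weak atomic system for a closable densely defined operator `A`, then
`{gₙ}` is a weak `A`-frame: there exists `α > 0` such that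
`α‖A* f‖² ≤ ∑ₙ |⟨f, gₙ⟩|² < ∞` for all `f ∈ D(A*)`. -/
theorem stmt_6 {H : Type*} [NormedAddCommGroup H] [InnerProductSpace ℂ H] [CompleteSpace H]
    (A : H →ₗ.[ℂ] H) (hA : Dense (A.domain : Set H)) (hAc : A.IsClosable) (g : ℕ → H)
    (hg : ∀ u : A.adjoint.domain, Summable fun n => ‖⟪(u : H), g n⟫‖ ^ 2)
    (hatom : ∃ γ : ℝ, 0 < γ ∧ ∀ h : A.domain, ∃ a : ℕ → ℂ,
      Summable (fun n => ‖a n‖ ^ 2) ∧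
      Real.sqrt (∑' n, ‖a n‖ ^ 2) ≤ γ * ‖(h : H)‖ ∧
      ∀ u : A.adjoint.domain, ⟪(u : H), A h⟫ = ∑' n, a n * ⟪(u : H), g n⟫) :
    ∃ α : ℝ, 0 < α ∧ ∀ u : A.adjoint.domain,
      (Summable fun n => ‖⟪(u : H), g n⟫‖ ^ 2) ∧
      α * ‖A.adjoint u‖ ^ 2 ≤ ∑' n, ‖⟪(u : H), g n⟫‖ ^ 2 := by
  obtain ⟨γ, hγ, hat⟩ := hatom
  refine ⟨γ⁻¹ ^ 2, by positivity, fun u => ⟨hg u, ?_⟩⟩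
  set v : H := A.adjoint u with hv
  set S : ℝ := ∑' n, ‖⟪(u : H), g n⟫‖ ^ 2 with hS
  have hS0 : 0 ≤ S := tsum_nonneg fun n => by positivity
  -- the key estimate on the dense domain
  have key : ∀ h : A.domain, ‖⟪v, (h : H)⟫‖ ≤ γ * Real.sqrt S * ‖(h : H)‖ := by
    intro h
    obtain ⟨a, ha, hbound, hrep⟩ := hat h
    have hfa : ⟪v, (h : H)⟫ = ⟪(u : H), A h⟫ :=
      LinearPMap.adjoint_isFormalAdjoint hA u h
    rw [hfa, hrep u]
    calc ‖∑' n, a n * ⟪(u : H), g n⟫‖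
        ≤ Real.sqrt (∑' n, ‖a n‖ ^ 2) * Real.sqrt S := cs_tsum _ _ ha (hg u)
      _ ≤ (γ * ‖(h : H)‖) * Real.sqrt S :=
          mul_le_mul_of_nonneg_right hbound (Real.sqrt_nonneg _)
      _ = γ * Real.sqrt S * ‖(h : H)‖ := by ring
  -- extend from the dense set to all of H
  have all : ∀ w : H, ‖⟪v, w⟫‖ ≤ γ * Real.sqrt S * ‖w‖ := by
    have hcl : IsClosed {w : H | ‖⟪v, w⟫‖ ≤ γ * Real.sqrt S * ‖w‖} :=
      isClosed_le ((continuous_const.inner continuous_id).norm)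
        (continuous_const.mul continuous_norm)
    intro w
    have : (A.domain : Set H) ⊆ {w : H | ‖⟪v, w⟫‖ ≤ γ * Real.sqrt S * ‖w‖} := by
      rintro x hx
      exact key ⟨x, hx⟩
    have := hcl.closure_subset_iff.mpr this
    rw [hA.closure_eq] at this
    exact this (Set.mem_univ w)
  have hvv := all v
  have hnn : ‖(⟪v, v⟫ : ℂ)‖ = ‖v‖ * ‖v‖ := by
    rw [inner_self_eq_norm_sq_to_K (𝕜 := ℂ)]
    simp [sq]
  rw [hnn] at hvv
  have hnv : ‖v‖ ≤ γ * Real.sqrt S := by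
    rcases eq_or_lt_of_le (norm_nonneg v) with h0 | h0
    · rw [← h0]; positivity
    · exact le_of_mul_le_mul_right hvv h0
  have hsq : ‖v‖ ^ 2 ≤ γ ^ 2 * S := by
    have := mul_self_le_mul_self (norm_nonneg v) hnv
    calc ‖v‖ ^ 2 = ‖v‖ * ‖v‖ := sq ‖v‖
      _ ≤ (γ * Real.sqrt S) * (γ * Real.sqrt S) := this
      _ = γ ^ 2 * (Real.sqrt S * Real.sqrt S) := by ring
      _ = γ ^ 2 * S := by rw [Real.mul_self_sqrt hS0]
  have hγ2 : (0:ℝ) < γ ^ 2 := by positivity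
  calc γ⁻¹ ^ 2 * ‖v‖ ^ 2 ≤ γ⁻¹ ^ 2 * (γ ^ 2 * S) := by
        exact mul_le_mul_of_nonneg_left hsq (by positivity)
    _ = S := by field_simp
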